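/- Fix T ≥ 1, d ≥ 1, subsampling probability p ∈ [0,1], noise multiplier σ > 0 and clipping norm C > 0. Let g0, g1 : {1,…,T} → ℝ^d satisfy ‖g0(t)‖₂ ≤ C and ‖g1(t)‖₂ ≤ C for all t. Then the DP-SGD gradient mixtures satisfy tv(M(g0), M(g1)) ≤ erf(p·√T/(√2 σ)) + √(p·T·(1−p))/σ; equivalently, the Bayes security of DP-SGD against record-level membership inference satisfies 1 − tv(M(g0), M(g1)) ≥ 1 − erf(p·√T/(√2 σ)) − √(p·T·(1−p))/σ. -/

import Mathlib

open MeasureTheory ProbabilityTheory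

/-- Total variation distance between two measures:
`sup_{A measurable} |P(A) - Q(A)|`. -/
noncomputable def tv {Ω : Type*} [MeasurableSpace Ω] (P Q : Measure Ω) : ℝ :=
  ⨆ A : {A : Set Ω // MeasurableSet A}, |(P A.1).toReal - (Q A.1).toReal|

/-- The Gauss error function `erf x = (2/√π) ∫₀ˣ exp (-t²) dt`. -/
noncomputable def erf (x : ℝ) : ℝ :=
  (2 / Real.sqrt Real.pi) * ∫ t in (0:ℝ)..x, Real.exp (-t ^ 2)

/-- The DP-SGD gradient mixture on `(ℝ^d)^T` for a mean sequence `g`: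
`M(g) = ∑_{b ∈ {0,1}^T} p^{|b|} (1-p)^{T-|b|} ⊗_t N(b_t g(t), v I_d)`. -/
noncomputable def dpsgdMixture (T d : ℕ) (p : ℝ) (v : NNReal)
    (g : Fin T → Fin d → ℝ) : Measure (Fin T → Fin d → ℝ) :=
  ∑ b : Fin T → Bool,
    (ENNReal.ofReal (p ^ (Finset.univ.filter fun t => b t = true).card *
        (1 - p) ^ (T - (Finset.univ.filter fun t => b t = true).card))) •
      Measure.pi (fun t => Measure.pi (fun j => gaussianReal (if b t then g t j else 0) v))

open Real Set
open scoped NNReal ENNReal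

namespace DPAux

lemma sqrt_coef_eq {u w : ℝ} (hu : 0 < u) (hw : 0 < w) :
    (Real.sqrt (2*π*u))⁻¹ * (Real.sqrt (2*π*w))⁻¹
      = (Real.sqrt (2*π*(u+w)))⁻¹ * Real.sqrt ((u+w)/(2*u*w) / π) := by
  have hπ := Real.pi_pos
  rw [← Real.sqrt_inv, ← Real.sqrt_inv, ← Real.sqrt_inv,
    ← Real.sqrt_mul (by positivity), ← Real.sqrt_mul (by positivity)]
  congr 1
  field_simp

lemma pdf_mul (a b z : ℝ) (u w : ℝ≥0) (hu : u ≠ 0) (hw : w ≠ 0) (x : ℝ) :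
    gaussianPDFReal a u x * gaussianPDFReal b w (z - x)
      = (gaussianPDFReal (a+b) (u+w) z * Real.sqrt (((u:ℝ)+w)/(2*u*w)/π))
        * Real.exp (-((((u:ℝ)+w))/(2*u*w)) * (x - (a + u*(z-a-b)/((u:ℝ)+w)))^2) := by
  have hu' : (0:ℝ) < u := by exact_mod_cast pos_iff_ne_zero.mpr hu
  have hw' : (0:ℝ) < w := by exact_mod_cast pos_iff_ne_zero.mpr hw
  have h1 : gaussianPDFReal a u x * gaussianPDFReal b w (z - x)
      = ((Real.sqrt (2*π*u))⁻¹ * (Real.sqrt (2*π*w))⁻¹)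
        * Real.exp (-(x-a)^2/(2*u) + -((z - x)-b)^2/(2*w)) := by
    simp only [gaussianPDFReal_def]
    rw [Real.exp_add]; ring
  have h2 : (gaussianPDFReal (a+b) (u+w) z * Real.sqrt (((u:ℝ)+w)/(2*u*w)/π))
        * Real.exp (-((((u:ℝ)+w))/(2*u*w)) * (x - (a + u*(z-a-b)/((u:ℝ)+w)))^2)
      = ((Real.sqrt (2*π*((u:ℝ)+w)))⁻¹ * Real.sqrt (((u:ℝ)+w)/(2*u*w)/π))
        * Real.exp (-(z-(a+b))^2/(2*((u:ℝ)+w))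
            + -((((u:ℝ)+w))/(2*u*w)) * (x - (a + u*(z-a-b)/((u:ℝ)+w)))^2) := by
    simp only [gaussianPDFReal_def, NNReal.coe_add]
    rw [Real.exp_add]; ring
  rw [h1, h2, sqrt_coef_eq hu' hw']
  congr 1
  rw [Real.exp_eq_exp]
  have huw : (0:ℝ) < (u:ℝ) + w := by positivity
  field_simp
  ring

lemma integrable_pdf_mul (a b z : ℝ) (u w : ℝ≥0) (hu : u ≠ 0) (hw : w ≠ 0) :
    Integrable (fun x => gaussianPDFReal a u x * gaussianPDFReal b w (z - x)) := by
  have hu' : (0:ℝ) < u := by exact_mod_cast pos_iff_ne_zero.mpr hu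
  have hw' : (0:ℝ) < w := by exact_mod_cast pos_iff_ne_zero.mpr hw
  have hk : (0:ℝ) < ((u:ℝ)+w)/(2*u*w) := by positivity
  have : (fun x => gaussianPDFReal a u x * gaussianPDFReal b w (z - x))
      = fun x => (gaussianPDFReal (a+b) (u+w) z * Real.sqrt (((u:ℝ)+w)/(2*u*w)/π))
        * Real.exp (-((((u:ℝ)+w))/(2*u*w)) * (x - (a + u*(z-a-b)/((u:ℝ)+w)))^2) := by
    funext x; exact pdf_mul a b z u w hu hw x
  rw [this]
  exact ((integrable_exp_neg_mul_sq hk).comp_sub_right _).const_mul _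

lemma integral_pdf_conv (a b z : ℝ) (u w : ℝ≥0) (hu : u ≠ 0) (hw : w ≠ 0) :
    ∫ x, gaussianPDFReal a u x * gaussianPDFReal b w (z - x)
      = gaussianPDFReal (a+b) (u+w) z := by
  have hu' : (0:ℝ) < u := by exact_mod_cast pos_iff_ne_zero.mpr hu
  have hw' : (0:ℝ) < w := by exact_mod_cast pos_iff_ne_zero.mpr hw
  have hk : (0:ℝ) < ((u:ℝ)+w)/(2*u*w) := by positivity
  simp_rw [pdf_mul a b z u w hu hw]
  rw [integral_const_mul,
    integral_sub_right_eq_self (fun t => Real.exp (-((((u:ℝ)+w))/(2*u*w)) * t^2)) _,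
    integral_gaussian]
  rw [mul_assoc, ← Real.sqrt_mul (by positivity)]
  have : ((u:ℝ)+w)/(2*u*w)/π * (π/(((u:ℝ)+w)/(2*u*w))) = 1 := by
    field_simp
  rw [this, Real.sqrt_one, mul_one]

lemma gaussianReal_conv (a b : ℝ) (u w : ℝ≥0) :
    Measure.map (fun p : ℝ × ℝ => p.1 + p.2) ((gaussianReal a u).prod (gaussianReal b w))
      = gaussianReal (a + b) (u + w) := by
  by_cases hu : u = 0
  · subst hu
    rw [gaussianReal_zero_var, Measure.dirac_prod,
      Measure.map_map (by fun_prop) (by fun_prop)]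
    have : ((fun p : ℝ × ℝ => p.1 + p.2) ∘ Prod.mk a) = (a + ·) := by funext y; simp
    rw [this, gaussianReal_map_const_add, add_comm b a, zero_add]
  by_cases hw : w = 0
  · subst hw
    rw [gaussianReal_zero_var, Measure.prod_dirac,
      Measure.map_map (by fun_prop) (by fun_prop)]
    have : ((fun p : ℝ × ℝ => p.1 + p.2) ∘ (fun x => (x, b))) = (· + b) := by funext y; simp
    rw [this, gaussianReal_map_add_const, add_zero]
  have huw : u + w ≠ 0 := by simp [hu]
  have hmadd : Measurable (fun p : ℝ × ℝ => p.1 + p.2) := by fun_prop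
  have : IsProbabilityMeasure (Measure.map (fun p : ℝ × ℝ => p.1 + p.2)
      ((gaussianReal a u).prod (gaussianReal b w))) :=
    Measure.isProbabilityMeasure_map hmadd.aemeasurable
  refine MeasureTheory.Measure.ext_of_Iic _ _ (fun t => ?_)
  rw [Measure.map_apply hmadd measurableSet_Iic]
  have hset : ∀ x : ℝ, Prod.mk x ⁻¹' ((fun p : ℝ × ℝ => p.1 + p.2) ⁻¹' Iic t) = Iic (t - x) := by
    intro x; ext y; simp [le_sub_iff_add_le, add_comm]
  rw [Measure.prod_apply (hmadd measurableSet_Iic)]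
  simp_rw [hset]
  have hinner : ∀ x : ℝ, gaussianReal b w (Iic (t - x))
      = ∫⁻ z in Iic t, gaussianPDF b w (z - x) := by
    intro x
    rw [gaussianReal_apply _ hw]
    have hmp : MeasurePreserving (fun y : ℝ => y + x) volume volume :=
      measurePreserving_add_right volume x
    have hemb : MeasurableEmbedding (fun y : ℝ => y + x) :=
      (MeasurableEquiv.addRight x).measurableEmbedding
    have h2 := hmp.setLIntegral_comp_emb hemb (fun z => gaussianPDF b w (z - x)) (Iic (t - x))
    have himg : (fun y : ℝ => y + x) '' (Iic (t - x)) = Iic t := by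
      ext y
      simp only [Set.mem_image, Set.mem_Iic]
      constructor
      · rintro ⟨a, ha, rfl⟩; linarith
      · intro hy; exact ⟨y - x, by linarith, by ring⟩
    rw [himg] at h2
    rw [← h2]
    congr 1
    funext y
    simp
  simp_rw [hinner]
  have hFmeas : Measurable fun x : ℝ => ∫⁻ z in Iic t, gaussianPDF b w (z - x) := by
    apply Measurable.lintegral_prod_right
    exact (measurable_gaussianPDF b w).comp (measurable_snd.sub measurable_fst)
  rw [gaussianReal_of_var_ne_zero a hu, gaussianPDF_def,
    lintegral_withDensity_eq_lintegral_mul _ (by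
      exact (measurable_gaussianPDFReal a u).ennreal_ofReal) hFmeas]
  have hpush : ∀ x : ℝ, ENNReal.ofReal (gaussianPDFReal a u x)
        * ∫⁻ z in Iic t, gaussianPDF b w (z - x)
      = ∫⁻ z in Iic t, ENNReal.ofReal (gaussianPDFReal a u x) * gaussianPDF b w (z - x) := by
    intro x
    exact (lintegral_const_mul _ ((measurable_gaussianPDF b w).comp (measurable_id.sub_const x))).symm
  simp only [Pi.mul_apply]
  simp_rw [hpush]
  rw [lintegral_lintegral_swap]
  swap
  · exact (((measurable_gaussianPDFReal a u).ennreal_ofReal.comp measurable_fst).mul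
      ((measurable_gaussianPDF b w).comp (measurable_snd.sub measurable_fst))).aemeasurable
  have hin : ∀ z : ℝ, (∫⁻ x, ENNReal.ofReal (gaussianPDFReal a u x)
        * gaussianPDF b w (z - x) ∂volume) = gaussianPDF (a+b) (u+w) z := by
    intro z
    have : ∀ x : ℝ, ENNReal.ofReal (gaussianPDFReal a u x) * gaussianPDF b w (z - x)
        = ENNReal.ofReal (gaussianPDFReal a u x * gaussianPDFReal b w (z - x)) := by
      intro x
      rw [gaussianPDF, ← ENNReal.ofReal_mul (gaussianPDFReal_nonneg a u x)]
    simp_rw [this]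
    rw [← ofReal_integral_eq_lintegral_ofReal (integrable_pdf_mul a b z u w hu hw)
      (ae_of_all _ fun x => mul_nonneg (gaussianPDFReal_nonneg _ _ _)
        (gaussianPDFReal_nonneg _ _ _)),
      integral_pdf_conv a b z u w hu hw, gaussianPDF]
  simp_rw [hin]
  rw [gaussianReal_apply _ huw]


/-- A pair of probability measures whose log likelihood ratio is Gaussian. -/
structure GaussPair {Ω : Type} [MeasurableSpace Ω] (P Q : Measure Ω) (θ : ℝ) : Prop where
  probP : IsProbabilityMeasure P
  probQ : IsProbabilityMeasure Q
  θnonneg : 0 ≤ θ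
  exists_ell : ∃ ℓ : Ω → ℝ, Measurable ℓ ∧
    Q = P.withDensity (fun x => ENNReal.ofReal (Real.exp (ℓ x))) ∧
    Measure.map ℓ P = gaussianReal (-θ/2) θ.toNNReal

lemma gaussPair_self {Ω : Type} [MeasurableSpace Ω] (P : Measure Ω)
    [hP : IsProbabilityMeasure P] : GaussPair P P 0 := by
  refine ⟨hP, hP, le_refl 0, fun _ => 0, measurable_const, ?_, ?_⟩
  · simp [Real.exp_zero, withDensity_one]
  · rw [Measure.map_const, measure_univ, one_smul]
    norm_num [Real.toNNReal_zero, gaussianReal_zero_var]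

lemma gaussPair_gaussian (m0 m1 : ℝ) (v : ℝ≥0) (hv : v ≠ 0) :
    GaussPair (gaussianReal m0 v) (gaussianReal m1 v) ((m1 - m0)^2 / v) := by
  have hv' : (0:ℝ) < v := by exact_mod_cast pos_iff_ne_zero.mpr hv
  have hθ : (0:ℝ) ≤ (m1 - m0)^2 / v := by positivity
  refine ⟨inferInstance, inferInstance, hθ,
    fun x => ((m1 - m0) * x - (m1^2 - m0^2)/2)/(v:ℝ), by fun_prop, ?_, ?_⟩
  · rw [gaussianReal_of_var_ne_zero m0 hv, gaussianReal_of_var_ne_zero m1 hv,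
      ← withDensity_mul _ (measurable_gaussianPDF m0 v) (by fun_prop)]
    congr 1
    funext x
    rw [Pi.mul_apply, gaussianPDF, gaussianPDF,
      ← ENNReal.ofReal_mul (gaussianPDFReal_nonneg m0 v x)]
    congr 1
    simp only [gaussianPDFReal_def]
    conv_rhs => rw [mul_assoc, ← Real.exp_add]
    congr 1
    rw [Real.exp_eq_exp]
    field_simp
    ring
  · have hfun : (fun x : ℝ => ((m1 - m0) * x - (m1^2 - m0^2)/2)/(v:ℝ))
        = (· + (-(m1^2 - m0^2)/(2*(v:ℝ)))) ∘ (((m1 - m0)/(v:ℝ)) * ·) := by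
      funext x
      simp only [Function.comp_apply]
      field_simp
      ring
    rw [hfun, ← Measure.map_map (measurable_add_const _) (measurable_const_mul _),
      gaussianReal_map_const_mul, gaussianReal_map_add_const]
    congr 1
    · field_simp
      ring
    · rw [← NNReal.coe_inj]
      push_cast [Real.coe_toNNReal _ hθ]
      field_simp

lemma map_withDensity_equiv {Ω Ω' : Type} [MeasurableSpace Ω] [MeasurableSpace Ω']
    (e : Ω ≃ᵐ Ω') (P : Measure Ω) (f : Ω → ℝ≥0∞) (hf : Measurable f) :
    (P.withDensity f).map e = (P.map e).withDensity (fun y => f (e.symm y)) := by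
  ext s hs
  rw [Measure.map_apply e.measurable hs, withDensity_apply _ (e.measurable hs),
    withDensity_apply _ hs,
    setLIntegral_map hs (show Measurable fun y => f (e.symm y) from hf.comp e.symm.measurable)
      e.measurable]
  simp

lemma GaussPair.map_equiv {Ω Ω' : Type} [MeasurableSpace Ω] [MeasurableSpace Ω']
    (e : Ω ≃ᵐ Ω') {P Q : Measure Ω} {θ : ℝ} (h : GaussPair P Q θ) :
    GaussPair (P.map e) (Q.map e) θ := by
  obtain ⟨hP, hQ, hθ, ℓ, hℓm, hQd, hℓmap⟩ := h
  refine ⟨Measure.isProbabilityMeasure_map e.measurable.aemeasurable,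
    Measure.isProbabilityMeasure_map e.measurable.aemeasurable, hθ,
    fun y => ℓ (e.symm y), hℓm.comp e.symm.measurable, ?_, ?_⟩
  · rw [hQd, map_withDensity_equiv e P _ (by fun_prop)]
  · rw [Measure.map_map (show Measurable fun y => ℓ (e.symm y) from hℓm.comp e.symm.measurable)
      e.measurable]
    have : ((fun y => ℓ (e.symm y)) ∘ e) = ℓ := by funext x; simp
    rw [this, hℓmap]

lemma GaussPair.prod {Ω Ω' : Type} [MeasurableSpace Ω] [MeasurableSpace Ω']
    {P Q : Measure Ω} {P' Q' : Measure Ω'} {θ θ' : ℝ}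
    (h : GaussPair P Q θ) (h' : GaussPair P' Q' θ') :
    GaussPair (P.prod P') (Q.prod Q') (θ + θ') := by
  obtain ⟨hP, hQ, hθ, ℓ, hℓm, hQd, hℓmap⟩ := h
  obtain ⟨hP', hQ', hθ', ℓ', hℓm', hQd', hℓmap'⟩ := h'
  haveI := hP; haveI := hQ; haveI := hP'; haveI := hQ'
  refine ⟨inferInstance, inferInstance, by positivity,
    fun p => ℓ p.1 + ℓ' p.2, by fun_prop, ?_, ?_⟩
  · refine Measure.prod_eq (μ := Q) (ν := Q') fun s t hs ht => ?_
    rw [withDensity_apply _ (hs.prod ht), ← Measure.prod_restrict]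
    have : ∀ p : Ω × Ω', ENNReal.ofReal (Real.exp (ℓ p.1 + ℓ' p.2))
        = ENNReal.ofReal (Real.exp (ℓ p.1)) * ENNReal.ofReal (Real.exp (ℓ' p.2)) := by
      intro p
      rw [Real.exp_add, ENNReal.ofReal_mul (Real.exp_nonneg _)]
    simp_rw [this]
    rw [lintegral_prod_mul (by fun_prop : Measurable fun x => ENNReal.ofReal (Real.exp (ℓ x))).aemeasurable
      (by fun_prop : Measurable fun x => ENNReal.ofReal (Real.exp (ℓ' x))).aemeasurable]
    rw [hQd, hQd', withDensity_apply _ hs, withDensity_apply _ ht]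
  · have hcomp : (fun p : Ω × Ω' => ℓ p.1 + ℓ' p.2)
        = (fun q : ℝ × ℝ => q.1 + q.2) ∘ (Prod.map ℓ ℓ') := rfl
    rw [hcomp, ← Measure.map_map (by fun_prop) (hℓm.prodMap hℓm'),
      ← Measure.map_prod_map _ _ hℓm hℓm', hℓmap, hℓmap', gaussianReal_conv]
    congr 1
    · ring
    · rw [← Real.toNNReal_add hθ hθ']

lemma gaussPair_pi : ∀ (n : ℕ) (X : Fin n → Type) (_ : ∀ i, MeasurableSpace (X i))
    (P Q : ∀ i, Measure (X i)) (θ : Fin n → ℝ),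
    (∀ i, GaussPair (P i) (Q i) (θ i)) →
    GaussPair (Measure.pi P) (Measure.pi Q) (∑ i, θ i) := by
  intro n
  induction n with
  | zero =>
    intro X _ P Q θ h
    haveI : ∀ i, IsProbabilityMeasure (P i) := fun i => i.elim0
    rw [Measure.pi_of_empty P, Measure.pi_of_empty Q]
    simpa using gaussPair_self _
  | succ n ih =>
    intro X mX P Q θ h
    haveI : ∀ i, IsProbabilityMeasure (P i) := fun i => (h i).probP
    haveI : ∀ i, IsProbabilityMeasure (Q i) := fun i => (h i).probQ
    have hGP := ((h 0).prod (ih (fun j => X ((0 : Fin (n+1)).succAbove j)) _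
      (fun j => P ((0 : Fin (n+1)).succAbove j)) (fun j => Q ((0 : Fin (n+1)).succAbove j))
      (fun j => θ ((0 : Fin (n+1)).succAbove j))
      (fun j => h _))).map_equiv (MeasurableEquiv.piFinSuccAbove X 0).symm
    have hP := ((measurePreserving_piFinSuccAbove (fun i => P i) 0).symm
      (MeasurableEquiv.piFinSuccAbove X 0)).map_eq
    have hQ := ((measurePreserving_piFinSuccAbove (fun i => Q i) 0).symm
      (MeasurableEquiv.piFinSuccAbove X 0)).map_eq
    rw [hP, hQ] at hGP
    have hsum : (∑ i, θ i) = θ 0 + ∑ j, θ ((0 : Fin (n+1)).succAbove j) :=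
      Fin.sum_univ_succAbove θ 0
    rw [hsum]
    exact hGP


lemma intInt_exp : ∀ a b : ℝ, IntervalIntegrable (fun t : ℝ => Real.exp (-t^2)) volume a b :=
  fun a b => (Real.continuous_exp.comp (continuous_pow 2).neg).intervalIntegrable a b

lemma erf_le_erf_add {x y : ℝ} (hx : 0 ≤ x) :
    erf y ≤ erf x + (2 / Real.sqrt π) * max (y - x) 0 := by
  have hπ : 0 < Real.sqrt π := Real.sqrt_pos.mpr Real.pi_pos
  have hsub : erf y - erf x = (2 / Real.sqrt π) * ∫ t in x..y, Real.exp (-t^2) := by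
    rw [erf, erf, ← mul_sub, intervalIntegral.integral_interval_sub_left (intInt_exp 0 y)
      (intInt_exp 0 x)]
  rcases le_total y x with hyx | hxy
  · have hint : 0 ≤ ∫ t in y..x, Real.exp (-t^2) :=
      intervalIntegral.integral_nonneg hyx (fun t _ => (Real.exp_pos _).le)
    have : erf y - erf x ≤ 0 := by
      rw [hsub, intervalIntegral.integral_symm]
      have h2 : 0 ≤ 2 / Real.sqrt π := by positivity
      nlinarith
    have hmax : 0 ≤ max (y - x) 0 := le_max_right _ _
    nlinarith [mul_nonneg (by positivity : (0:ℝ) ≤ 2 / Real.sqrt π) hmax]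
  · have hone : ∫ t in x..y, Real.exp (-t^2) ≤ ∫ t in x..y, (1:ℝ) := by
      refine intervalIntegral.integral_mono_on hxy (intInt_exp x y)
        (intervalIntegrable_const) (fun t _ => ?_)
      calc Real.exp (-t^2) ≤ Real.exp 0 := Real.exp_le_exp.mpr (by nlinarith)
      _ = 1 := Real.exp_zero
    have h1 : ∫ t in x..y, (1:ℝ) = y - x := by simp
    have hmax : max (y - x) 0 = y - x := max_eq_left (by linarith)
    rw [hmax]
    have h2 : 0 ≤ 2 / Real.sqrt π := by positivity
    nlinarith [hsub, mul_le_mul_of_nonneg_left (hone.trans h1.le) h2]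

lemma integral_G {θ : ℝ} (hθ : 0 ≤ θ) :
    ∫ y, max (1 - Real.exp y) 0 ∂(gaussianReal (-θ/2) θ.toNNReal)
      ≤ erf (Real.sqrt θ / (2*Real.sqrt 2)) := by
  rcases eq_or_lt_of_le hθ with h0 | hθpos
  · subst h0
    rw [show -(0:ℝ)/2 = 0 by norm_num, Real.toNNReal_zero, gaussianReal_zero_var,
      integral_dirac]
    simp [erf, Real.exp_zero]
  have hv : θ.toNNReal ≠ 0 := by
    simp [Real.toNNReal_eq_zero, not_le, hθpos]
  have hvθ : ((θ.toNNReal : ℝ≥0) : ℝ) = θ := Real.coe_toNNReal θ hθ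
  set m : ℝ := -θ/2 with hm
  -- express as a Lebesgue integral against the density
  have hmeq : gaussianReal m θ.toNNReal
      = volume.withDensity (fun y => ((gaussianPDFReal m θ.toNNReal y).toNNReal : ℝ≥0∞)) := by
    rw [gaussianReal_of_var_ne_zero _ hv]
    rfl
  rw [hmeq, integral_withDensity_eq_integral_smul
    (by exact (measurable_gaussianPDFReal m θ.toNNReal).real_toNNReal)]
  have hsmul : ∀ y : ℝ, (gaussianPDFReal m θ.toNNReal y).toNNReal • max (1 - Real.exp y) 0
      = gaussianPDFReal m θ.toNNReal y * max (1 - Real.exp y) 0 := by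
    intro y
    simp [NNReal.smul_def, Real.coe_toNNReal _ (gaussianPDFReal_nonneg m θ.toNNReal y)]
  simp_rw [hsmul]
  -- pointwise rewrite to an indicator
  have hpt : ∀ y : ℝ, gaussianPDFReal m θ.toNNReal y * max (1 - Real.exp y) 0
      = Set.indicator (Iic (0:ℝ))
          (fun y => gaussianPDFReal m θ.toNNReal y - gaussianPDFReal m θ.toNNReal (y - θ)) y := by
    intro y
    rcases le_or_gt y 0 with hy | hy
    · rw [Set.indicator_of_mem (by exact hy : y ∈ Iic (0:ℝ))]
      have hmax : max (1 - Real.exp y) 0 = 1 - Real.exp y := by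
        have := Real.exp_le_exp.mpr (le_of_lt (lt_of_le_of_lt hy (by norm_num : (0:ℝ) < 1)))
        have h1 : Real.exp y ≤ 1 := by
          calc Real.exp y ≤ Real.exp 0 := Real.exp_le_exp.mpr hy
          _ = 1 := Real.exp_zero
        exact max_eq_left (by linarith)
      rw [hmax, mul_sub, mul_one]
      congr 1
      simp only [gaussianPDFReal_def, hvθ]
      have hexp : Real.exp (-(y - m)^2/(2*θ)) * Real.exp y
          = Real.exp (-(y - θ - m)^2/(2*θ)) := by
        rw [← Real.exp_add]
        congr 1
        rw [hm]
        field_simp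
        ring
      rw [mul_assoc, hexp]
    · rw [Set.indicator_of_notMem (by simpa using hy)]
      have hmax : max (1 - Real.exp y) 0 = 0 := by
        have h1 : 1 ≤ Real.exp y := by
          calc (1:ℝ) = Real.exp 0 := Real.exp_zero.symm
          _ ≤ Real.exp y := Real.exp_le_exp.mpr hy.le
        exact max_eq_right (by linarith)
      rw [hmax, mul_zero]
  simp_rw [hpt]
  rw [MeasureTheory.integral_indicator measurableSet_Iic]
  have hint1 : IntegrableOn (fun y => gaussianPDFReal m θ.toNNReal y) (Iic (0:ℝ)) :=
    (integrable_gaussianPDFReal m θ.toNNReal).integrableOn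
  have hint2 : IntegrableOn (fun y => gaussianPDFReal m θ.toNNReal (y - θ)) (Iic (0:ℝ)) :=
    ((integrable_gaussianPDFReal m θ.toNNReal).comp_sub_right θ).integrableOn
  rw [integral_sub hint1 hint2]
  -- translate the second integral
  have htrans : ∫ y in Iic (0:ℝ), gaussianPDFReal m θ.toNNReal (y - θ)
      = ∫ y in Iic (-θ), gaussianPDFReal m θ.toNNReal y := by
    have hmp : MeasurePreserving (fun y : ℝ => y - θ) volume volume :=
      measurePreserving_sub_right volume θ
    have hemb : MeasurableEmbedding (fun y : ℝ => y - θ) :=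
      (MeasurableEquiv.subRight θ).measurableEmbedding
    have hpre : (fun y : ℝ => y - θ) ⁻¹' (Iic (-θ)) = Iic (0:ℝ) := by
      ext y; simp only [Set.mem_preimage, Set.mem_Iic]; constructor <;> intro <;> linarith
    have := hmp.setIntegral_preimage_emb hemb (fun y => gaussianPDFReal m θ.toNNReal y) (Iic (-θ))
    rw [hpre] at this
    exact this
  rw [htrans]
  have hD := intervalIntegral.integral_Iic_sub_Iic
    ((integrable_gaussianPDFReal m θ.toNNReal).integrableOn
      (s := Iic (-θ))) hint1
  rw [hD]
  -- now evaluate the interval integral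
  apply le_of_eq
  have hne : Real.sqrt (2*θ) ≠ 0 := by positivity
  have hsθ : 0 < Real.sqrt θ := Real.sqrt_pos.mpr hθpos
  have hs2 : (0:ℝ) < Real.sqrt 2 := by positivity
  have hpdf : ∀ y : ℝ, gaussianPDFReal m θ.toNNReal y
      = (Real.sqrt (2*π*θ))⁻¹
        * Real.exp (-(y/Real.sqrt (2*θ) + (θ/2)/Real.sqrt (2*θ))^2) := by
    intro y
    simp only [gaussianPDFReal_def, hvθ, hm]
    congr 2
    rw [← add_div, div_pow, Real.sq_sqrt (by positivity : (0:ℝ) ≤ 2*θ)]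
    ring
  simp_rw [hpdf]
  rw [intervalIntegral.integral_const_mul,
    intervalIntegral.integral_comp_div_add (fun t => Real.exp (-t^2)) hne ((θ/2)/Real.sqrt (2*θ))]
  have hx0 : (θ/2)/Real.sqrt (2*θ) = Real.sqrt θ/(2*Real.sqrt 2) := by
    rw [Real.sqrt_mul (by norm_num : (0:ℝ) ≤ 2) θ, div_div,
      div_eq_div_iff (by positivity) (by positivity)]
    nlinarith [Real.mul_self_sqrt hθ]
  have hlow : (-θ)/Real.sqrt (2*θ) + (θ/2)/Real.sqrt (2*θ) = -(Real.sqrt θ/(2*Real.sqrt 2)) := by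
    rw [← add_div, show -θ + θ/2 = -(θ/2) by ring, neg_div, hx0]
  have hup : (0:ℝ)/Real.sqrt (2*θ) + (θ/2)/Real.sqrt (2*θ) = Real.sqrt θ/(2*Real.sqrt 2) := by
    rw [zero_div, zero_add, hx0]
  rw [hlow, hup]
  have hsym : ∫ t in (-(Real.sqrt θ/(2*Real.sqrt 2)))..(Real.sqrt θ/(2*Real.sqrt 2)),
      Real.exp (-t^2) = 2 * ∫ t in (0:ℝ)..(Real.sqrt θ/(2*Real.sqrt 2)), Real.exp (-t^2) := by
    set c := Real.sqrt θ/(2*Real.sqrt 2) with hc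
    have h1 := intervalIntegral.integral_comp_neg (a := (0:ℝ)) (b := c)
      (fun t => Real.exp (-t^2))
    simp only [neg_neg, neg_zero, neg_sq] at h1
    rw [← intervalIntegral.integral_add_adjacent_intervals (intInt_exp (-c) 0) (intInt_exp 0 c),
      ← h1, two_mul]
  rw [hsym]
  have hcoef : (Real.sqrt (2*π*θ))⁻¹ * Real.sqrt (2*θ) = (Real.sqrt π)⁻¹ := by
    rw [show (2*π*θ) = π*(2*θ) by ring, Real.sqrt_mul Real.pi_pos.le, mul_inv, mul_assoc,
      inv_mul_cancel₀ hne, mul_one]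
  rw [smul_eq_mul, ← mul_assoc, ← mul_assoc, hcoef, erf, div_eq_mul_inv]
  ring


theorem gaussPair_bound {Ω : Type} [MeasurableSpace Ω] {P Q : Measure Ω} {θ : ℝ}
    (h : GaussPair P Q θ) {A : Set Ω} (hA : MeasurableSet A) :
    |(P A).toReal - (Q A).toReal| ≤ erf (Real.sqrt θ / (2*Real.sqrt 2)) := by
  obtain ⟨hP, hQ, hθ, ℓ, hℓm, hQd, hℓmap⟩ := h
  haveI := hP; haveI := hQ
  set r : Ω → ℝ := fun x => Real.exp (ℓ x) with hr
  have hrm : Measurable r := by fun_prop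
  have hlint : ∫⁻ x, ENNReal.ofReal (r x) ∂P = 1 := by
    have h1 : Q Set.univ = 1 := measure_univ
    rw [hQd, withDensity_apply _ MeasurableSet.univ, Measure.restrict_univ] at h1
    exact h1
  have hint : Integrable r P := by
    have := integrable_toReal_of_lintegral_ne_top
      (μ := P) (f := fun x => ENNReal.ofReal (r x))
      (hrm.ennreal_ofReal.aemeasurable) (by rw [hlint]; exact ENNReal.one_ne_top)
    refine this.congr (ae_of_all _ fun x => ?_)
    simpa using ENNReal.toReal_ofReal (Real.exp_nonneg (ℓ x))
  have hQA : ∀ {B : Set Ω}, MeasurableSet B → (Q B).toReal = ∫ x in B, r x ∂P := by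
    intro B hB
    rw [hQd, withDensity_apply _ hB,
      ← ofReal_integral_eq_lintegral_ofReal hint.integrableOn
        (ae_of_all _ fun x => Real.exp_nonneg _),
      ENNReal.toReal_ofReal (integral_nonneg fun x => Real.exp_nonneg _)]
  have hPA : ∀ {B : Set Ω}, MeasurableSet B → (P B).toReal = ∫ _x in B, (1:ℝ) ∂P := by
    intro B _
    rw [setIntegral_const, smul_eq_mul, mul_one]
    rfl
  have hintr : ∫ x, r x ∂P = 1 := by
    have h2 := ofReal_integral_eq_lintegral_ofReal hint
      (ae_of_all _ fun x => Real.exp_nonneg _)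
    rw [hlint] at h2
    exact ENNReal.ofReal_eq_one.mp h2
  set g : Ω → ℝ := fun x => max (1 - r x) 0 with hg
  have hgint : Integrable g P := ((integrable_const (1:ℝ)).sub hint).pos_part
  have hgnn : ∀ x, 0 ≤ g x := fun x => le_max_right _ _
  have key : ∫ x, g x ∂P ≤ erf (Real.sqrt θ / (2*Real.sqrt 2)) := by
    have hmapint : ∫ x, g x ∂P
        = ∫ y, max (1 - Real.exp y) 0 ∂(Measure.map ℓ P) := by
      rw [integral_map hℓm.aemeasurable]
      exact ((continuous_const.sub Real.continuous_exp).max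
        continuous_const).aestronglyMeasurable
    rw [hmapint, hℓmap]
    exact integral_G hθ
  rw [abs_sub_le_iff]
  constructor
  · calc (P A).toReal - (Q A).toReal = ∫ x in A, (1 - r x) ∂P := by
          rw [hPA hA, hQA hA, ← integral_sub (integrableOn_const (C := (1:ℝ)) (measure_ne_top _ _))
            hint.integrableOn]
    _ ≤ ∫ x in A, g x ∂P :=
          integral_mono ((integrableOn_const (C := (1:ℝ)) (measure_ne_top _ _)).sub
            hint.integrableOn) hgint.integrableOn (fun x => le_max_left _ _)
    _ ≤ ∫ x, g x ∂P := setIntegral_le_integral hgint (ae_of_all _ hgnn)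
    _ ≤ _ := key
  · calc (Q A).toReal - (P A).toReal = ∫ x in A, (r x - 1) ∂P := by
          rw [hPA hA, hQA hA, ← integral_sub hint.integrableOn
            (integrableOn_const (C := (1:ℝ)) (measure_ne_top _ _))]
    _ ≤ ∫ x in A, (g x + (r x - 1)) ∂P := by
          refine integral_mono (hint.integrableOn.sub
            (integrableOn_const (C := (1:ℝ)) (measure_ne_top _ _)))
            ((hgint.integrableOn).add (hint.integrableOn.sub
              (integrableOn_const (C := (1:ℝ)) (measure_ne_top _ _)))) (fun x => ?_)
          have := hgnn x
          linarith
    _ ≤ ∫ x, (g x + (r x - 1)) ∂P := by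
          refine setIntegral_le_integral (hgint.add (hint.sub (integrable_const 1)))
            (ae_of_all _ fun x => ?_)
          show (0:ℝ) ≤ g x + (r x - 1)
          have h3 := le_max_left (1 - r x) 0
          simp only [hg]
          linarith
    _ = ∫ x, g x ∂P := by
          rw [integral_add hgint (show Integrable (fun x => r x - 1) P from
            hint.sub (integrable_const 1)),
            integral_sub hint (integrable_const 1), hintr, integral_const, probReal_univ]
          simp
    _ ≤ _ := key


/-! ### Binomial weight combinatorics -/

noncomputable def wfun (T : ℕ) (p : ℝ) (b : Fin T → Bool) : ℝ :=
  p ^ (Finset.univ.filter fun t => b t = true).card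
    * (1 - p) ^ (T - (Finset.univ.filter fun t => b t = true).card)

def kfun (T : ℕ) (b : Fin T → Bool) : ℕ := (Finset.univ.filter fun t => b t = true).card

lemma kfun_le (T : ℕ) (b : Fin T → Bool) : kfun T b ≤ T := by
  unfold kfun
  calc (Finset.univ.filter fun t => b t = true).card ≤ (Finset.univ : Finset (Fin T)).card :=
        Finset.card_filter_le _ _
  _ = T := by simp

lemma wfun_nonneg {T : ℕ} {p : ℝ} (hp0 : 0 ≤ p) (hp1 : p ≤ 1) (b : Fin T → Bool) :
    0 ≤ wfun T p b :=
  mul_nonneg (pow_nonneg hp0 _) (pow_nonneg (by linarith) _)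

lemma sum_prod_bool {T : ℕ} (φ : Fin T → Bool → ℝ) :
    ∑ b : Fin T → Bool, ∏ t, φ t (b t) = ∏ t, (φ t true + φ t false) := by
  rw [← Fintype.prod_sum φ]
  refine Finset.prod_congr rfl fun t _ => ?_
  rw [Fintype.sum_bool]

lemma wfun_eq_prod {T : ℕ} (p : ℝ) (b : Fin T → Bool) :
    wfun T p b = ∏ t, (if b t then p else 1 - p) := by
  unfold wfun
  rw [Finset.prod_ite (fun _ => p) (fun _ => 1 - p), Finset.prod_const, Finset.prod_const]
  have hcard := Finset.card_filter_add_card_filter_not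
    (s := (Finset.univ : Finset (Fin T))) (p := fun t => b t = true)
  simp only [Finset.card_univ, Fintype.card_fin] at hcard
  have h2 : (Finset.univ.filter fun t => ¬ b t = true).card
      = T - (Finset.univ.filter fun t => b t = true).card := by omega
  rw [h2]

lemma sum_wfun {T : ℕ} (p : ℝ) : ∑ b : Fin T → Bool, wfun T p b = 1 := by
  calc ∑ b : Fin T → Bool, wfun T p b
      = ∑ b : Fin T → Bool, ∏ t, (if b t then p else 1 - p) :=
        Finset.sum_congr rfl fun b _ => wfun_eq_prod p b
  _ = ∏ t : Fin T, ((if true then p else 1-p) + (if false then p else 1-p)) :=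
        sum_prod_bool (fun _ y => if y then p else 1 - p)
  _ = 1 := by simp

lemma kfun_cast {T : ℕ} (b : Fin T → Bool) :
    ((kfun T b : ℕ) : ℝ) = ∑ t, (if b t then (1:ℝ) else 0) := by
  unfold kfun
  rw [Finset.card_filter]
  push_cast
  rfl

lemma sum_wfun_mul_k {T : ℕ} (p : ℝ) :
    ∑ b : Fin T → Bool, wfun T p b * (kfun T b : ℝ) = p * T := by
  classical
  calc ∑ b : Fin T → Bool, wfun T p b * (kfun T b : ℝ)
      = ∑ b : Fin T → Bool, ∑ t, (∏ s, (if b s then p else 1-p)) * (if b t then (1:ℝ) else 0) := by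
        refine Finset.sum_congr rfl fun b _ => ?_
        rw [wfun_eq_prod, kfun_cast, Finset.mul_sum]
  _ = ∑ t : Fin T, ∑ b : Fin T → Bool,
        ∏ s, (if s = t then (if b s then p else 0) else (if b s then p else 1-p)) := by
        rw [Finset.sum_comm]
        refine Finset.sum_congr rfl fun t _ => Finset.sum_congr rfl fun b _ => ?_
        rw [← Finset.mul_prod_erase Finset.univ (fun s => if b s then p else 1-p)
            (Finset.mem_univ t),
          ← Finset.mul_prod_erase Finset.univ
            (fun s => if s = t then (if b s then p else 0) else (if b s then p else 1-p))
            (Finset.mem_univ t)]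
        have hrest : ∏ s ∈ Finset.univ.erase t, (if b s then p else 1-p)
            = ∏ s ∈ Finset.univ.erase t,
              (if s = t then (if b s then p else 0) else (if b s then p else 1-p)) := by
          refine Finset.prod_congr rfl fun s hs => ?_
          rw [if_neg (Finset.ne_of_mem_erase hs)]
        rw [← hrest, if_pos rfl]
        cases hbt : b t <;> simp [hbt] <;> ring
  _ = ∑ t : Fin T, ∏ s : Fin T,
        ((if s = t then (if true then p else 0) else (if true then p else 1-p))
          + (if s = t then (if false then p else 0) else (if false then p else 1-p))) :=
        Finset.sum_congr rfl fun t _ => sum_prod_bool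
          (fun s y => if s = t then (if y then p else 0) else (if y then p else 1-p))
  _ = ∑ t : Fin T, ∏ s : Fin T, (if s = t then p else 1) := by
        refine Finset.sum_congr rfl fun t _ => Finset.prod_congr rfl fun s _ => ?_
        by_cases h : s = t
        · simp [h]
        · simp only [if_neg h, if_true, if_false, Bool.false_eq_true]
          ring
  _ = ∑ _t : Fin T, p := by
        refine Finset.sum_congr rfl fun t _ => ?_
        rw [Finset.prod_ite_eq' Finset.univ t (fun _ => p)]
        simp
  _ = p * T := by
        rw [Finset.sum_const, Finset.card_univ, Fintype.card_fin, nsmul_eq_mul]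
        ring

lemma sum_sq_sub_le {d : ℕ} (a c : Fin d → ℝ) {C : ℝ} (hC : 0 < C)
    (ha : Real.sqrt (∑ j, a j ^ 2) ≤ C) (hc : Real.sqrt (∑ j, c j ^ 2) ≤ C) :
    ∑ j, (c j - a j) ^ 2 ≤ 4 * C ^ 2 := by
  have hA0 : (0:ℝ) ≤ ∑ j, a j ^ 2 := Finset.sum_nonneg fun j _ => sq_nonneg _
  have hB0 : (0:ℝ) ≤ ∑ j, c j ^ 2 := Finset.sum_nonneg fun j _ => sq_nonneg _
  have hA : ∑ j, a j ^ 2 ≤ C ^ 2 := by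
    nlinarith [Real.sq_sqrt hA0, Real.sqrt_nonneg (∑ j, a j ^ 2)]
  have hB : ∑ j, c j ^ 2 ≤ C ^ 2 := by
    nlinarith [Real.sq_sqrt hB0, Real.sqrt_nonneg (∑ j, c j ^ 2)]
  have hCS := Finset.sum_mul_sq_le_sq_mul_sq Finset.univ c a
  have hprod : (∑ j, c j ^ 2) * (∑ j, a j ^ 2) ≤ C ^ 2 * C ^ 2 :=
    mul_le_mul hB hA hA0 (by positivity)
  have h1 : (∑ j, c j * a j) ^ 2 ≤ (C ^ 2) ^ 2 := by nlinarith
  have habs : |∑ j, c j * a j| ≤ C ^ 2 := by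
    calc |∑ j, c j * a j| = Real.sqrt ((∑ j, c j * a j) ^ 2) := (Real.sqrt_sq_eq_abs _).symm
    _ ≤ Real.sqrt ((C ^ 2) ^ 2) := Real.sqrt_le_sqrt h1
    _ = C ^ 2 := Real.sqrt_sq (by positivity)
  have hneg : -(C ^ 2) ≤ ∑ j, c j * a j := (abs_le.mp habs).1
  have hexp : ∑ j, (c j - a j) ^ 2
      = ∑ j, c j ^ 2 - 2 * (∑ j, c j * a j) + ∑ j, a j ^ 2 := by
    have hptw : ∀ j, (c j - a j)^2 = c j^2 - 2*(c j * a j) + a j^2 := fun j => by ring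
    rw [Finset.sum_congr rfl fun j _ => hptw j, Finset.sum_add_distrib,
      Finset.sum_sub_distrib, ← Finset.mul_sum]
  linarith



lemma dpsgd_apply_toReal (T d : ℕ) (p : ℝ) (hp0 : 0 ≤ p) (hp1 : p ≤ 1) (v : ℝ≥0)
    (g : Fin T → Fin d → ℝ) (s : Set (Fin T → Fin d → ℝ)) :
    (dpsgdMixture T d p v g s).toReal
      = ∑ b : Fin T → Bool, wfun T p b *
        ((Measure.pi fun t => Measure.pi fun j =>
          gaussianReal (if b t then g t j else 0) v) s).toReal := by
  unfold dpsgdMixture wfun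
  rw [Measure.finset_sum_apply, ENNReal.toReal_sum]
  · refine Finset.sum_congr rfl fun b _ => ?_
    rw [Measure.smul_apply, smul_eq_mul, ENNReal.toReal_mul,
      ENNReal.toReal_ofReal (mul_nonneg (pow_nonneg hp0 _) (pow_nonneg (by linarith) _))]
  · intro b _
    rw [Measure.smul_apply, smul_eq_mul]
    exact ENNReal.mul_ne_top ENNReal.ofReal_ne_top (measure_ne_top _ _)

end DPAux

theorem tv_dpsgdMixture_mia_le (T d : ℕ) (hT : 1 ≤ T) (hd : 1 ≤ d)
    (p σ C : ℝ) (hp0 : 0 ≤ p) (hp1 : p ≤ 1) (hσ : 0 < σ) (hC : 0 < C)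
    (g0 g1 : Fin T → Fin d → ℝ)
    (hg0 : ∀ t, Real.sqrt (∑ j, (g0 t j) ^ 2) ≤ C)
    (hg1 : ∀ t, Real.sqrt (∑ j, (g1 t j) ^ 2) ≤ C) :
    tv (dpsgdMixture T d p ((σ ^ 2 * C ^ 2).toNNReal) g0)
        (dpsgdMixture T d p ((σ ^ 2 * C ^ 2).toNNReal) g1)
      ≤ erf (p * Real.sqrt T / (Real.sqrt 2 * σ))
        + Real.sqrt (p * T * (1 - p)) / σ := by
  classical
  have hπ0 : (0:ℝ) < Real.sqrt π := Real.sqrt_pos.mpr Real.pi_pos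
  have hs2 : (0:ℝ) < Real.sqrt 2 := Real.sqrt_pos.mpr (by norm_num)
  have hT' : (0:ℝ) < T := by exact_mod_cast Nat.lt_of_lt_of_le Nat.zero_lt_one hT
  have hsT : (0:ℝ) < Real.sqrt T := Real.sqrt_pos.mpr hT'
  have hvpos : (0:ℝ) < σ^2*C^2 := by positivity
  set v : ℝ≥0 := (σ ^ 2 * C ^ 2).toNNReal with hvdef
  have hv : v ≠ 0 := by
    simp only [hvdef, ne_eq, Real.toNNReal_eq_zero, not_le]
    exact hvpos
  have hvr : ((v : ℝ≥0) : ℝ) = σ^2*C^2 := Real.coe_toNNReal _ hvpos.le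
  set x0 : ℝ := p * Real.sqrt T / (Real.sqrt 2 * σ) with hx0def
  have hx00 : 0 ≤ x0 := by positivity
  have hw0 : ∀ b : Fin T → Bool, 0 ≤ DPAux.wfun T p b := fun b => DPAux.wfun_nonneg hp0 hp1 b
  -- per-b Gaussian pairs
  have hpair : ∀ b : Fin T → Bool, DPAux.GaussPair
      (Measure.pi fun t => Measure.pi fun j => gaussianReal (if b t then g0 t j else 0) v)
      (Measure.pi fun t => Measure.pi fun j => gaussianReal (if b t then g1 t j else 0) v)
      (∑ t, ∑ j, ((if b t then g1 t j else 0) - (if b t then g0 t j else 0))^2/(v:ℝ)) :=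
    fun b => DPAux.gaussPair_pi T (fun _ => Fin d → ℝ) (fun _ => inferInstance) _ _ _
      (fun t => DPAux.gaussPair_pi d (fun _ => ℝ) (fun _ => inferInstance) _ _ _
        (fun j => DPAux.gaussPair_gaussian _ _ v hv))
  -- θ bound
  have hθle : ∀ b : Fin T → Bool,
      (∑ t, ∑ j, ((if b t then g1 t j else 0) - (if b t then g0 t j else 0))^2/(v:ℝ))
        ≤ 4*(DPAux.kfun T b : ℝ)/σ^2 := by
    intro b
    have hptw : ∀ t : Fin T,
        (∑ j, ((if b t then g1 t j else 0) - (if b t then g0 t j else 0))^2/(v:ℝ))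
          ≤ (if b t then (4:ℝ)/σ^2 else 0) := by
      intro t
      by_cases hbt : b t
      · simp only [if_pos hbt]
        rw [← Finset.sum_div]
        have hsum := DPAux.sum_sq_sub_le (g0 t) (g1 t) hC (hg0 t) (hg1 t)
        rw [hvr, div_le_div_iff₀ (by positivity) (by positivity)]
        nlinarith [sq_nonneg σ, sq_nonneg C, hsum]
      · simp only [if_neg hbt]
        simp
    calc (∑ t, ∑ j, ((if b t then g1 t j else 0) - (if b t then g0 t j else 0))^2/(v:ℝ))
        ≤ ∑ t, (if b t then (4:ℝ)/σ^2 else 0) := Finset.sum_le_sum fun t _ => hptw t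
    _ = (DPAux.kfun T b : ℝ) * (4/σ^2) := by
        rw [← Finset.sum_filter, Finset.sum_const, nsmul_eq_mul]
        rfl
    _ = 4*(DPAux.kfun T b : ℝ)/σ^2 := by ring
  -- per-b bound
  have hbound : ∀ (b : Fin T → Bool) (A : Set (Fin T → Fin d → ℝ)), MeasurableSet A →
      |((Measure.pi fun t => Measure.pi fun j =>
          gaussianReal (if b t then g0 t j else 0) v) A).toReal
        - ((Measure.pi fun t => Measure.pi fun j =>
          gaussianReal (if b t then g1 t j else 0) v) A).toReal|
      ≤ erf x0 + (2/Real.sqrt π)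
          * (max (Real.sqrt (DPAux.kfun T b) - p*Real.sqrt T) 0 / (Real.sqrt 2 * σ)) := by
    intro b A hA
    have h1 := DPAux.gaussPair_bound (hpair b) hA
    have hk0 : (0:ℝ) ≤ (DPAux.kfun T b : ℝ) := Nat.cast_nonneg _
    set θ : ℝ := ∑ t, ∑ j, ((if b t then g1 t j else 0) - (if b t then g0 t j else 0))^2/(v:ℝ)
      with hθdef
    have harg : Real.sqrt θ/(2*Real.sqrt 2)
        ≤ Real.sqrt (DPAux.kfun T b)/(Real.sqrt 2*σ) := by
      have h2 : Real.sqrt θ ≤ Real.sqrt (4*(DPAux.kfun T b : ℝ)/σ^2) :=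
        Real.sqrt_le_sqrt (hθle b)
      have h3 : Real.sqrt (4*(DPAux.kfun T b : ℝ)/σ^2) = 2*Real.sqrt (DPAux.kfun T b)/σ := by
        rw [show 4*(DPAux.kfun T b : ℝ)/σ^2 = (2*Real.sqrt (DPAux.kfun T b)/σ)^2 by
          rw [div_pow, mul_pow, Real.sq_sqrt hk0]; ring]
        exact Real.sqrt_sq (by positivity)
      calc Real.sqrt θ/(2*Real.sqrt 2) ≤ (2*Real.sqrt (DPAux.kfun T b)/σ)/(2*Real.sqrt 2) :=
            (div_le_div_iff_of_pos_right (by positivity)).mpr (h2.trans_eq h3)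
      _ = Real.sqrt (DPAux.kfun T b)/(Real.sqrt 2*σ) := by
            field_simp
    have h4 := DPAux.erf_le_erf_add (x := x0) (y := Real.sqrt θ/(2*Real.sqrt 2)) hx00
    have h5 : max (Real.sqrt θ/(2*Real.sqrt 2) - x0) 0
        ≤ max (Real.sqrt (DPAux.kfun T b) - p*Real.sqrt T) 0/(Real.sqrt 2*σ) := by
      have h6 : Real.sqrt (DPAux.kfun T b)/(Real.sqrt 2*σ) - x0
          = (Real.sqrt (DPAux.kfun T b) - p*Real.sqrt T)/(Real.sqrt 2*σ) := by
        rw [hx0def]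
        ring
      calc max (Real.sqrt θ/(2*Real.sqrt 2) - x0) 0
          ≤ max (Real.sqrt (DPAux.kfun T b)/(Real.sqrt 2*σ) - x0) 0 :=
            max_le_max (sub_le_sub_right harg x0) le_rfl
      _ = max ((Real.sqrt (DPAux.kfun T b) - p*Real.sqrt T)/(Real.sqrt 2*σ))
            ((0:ℝ)/(Real.sqrt 2*σ)) := by rw [h6, zero_div]
      _ = max (Real.sqrt (DPAux.kfun T b) - p*Real.sqrt T) 0/(Real.sqrt 2*σ) :=
            max_div_div_right (by positivity) _ _
    have h7 : (0:ℝ) ≤ 2/Real.sqrt π := by positivity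
    calc |((Measure.pi fun t => Measure.pi fun j =>
          gaussianReal (if b t then g0 t j else 0) v) A).toReal
        - ((Measure.pi fun t => Measure.pi fun j =>
          gaussianReal (if b t then g1 t j else 0) v) A).toReal|
        ≤ erf (Real.sqrt θ/(2*Real.sqrt 2)) := h1
    _ ≤ erf x0 + (2/Real.sqrt π) * max (Real.sqrt θ/(2*Real.sqrt 2) - x0) 0 := h4
    _ ≤ erf x0 + (2/Real.sqrt π)
          * (max (Real.sqrt (DPAux.kfun T b) - p*Real.sqrt T) 0 / (Real.sqrt 2 * σ)) := by
        have := mul_le_mul_of_nonneg_left h5 h7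
        linarith
  -- aggregated Cauchy-Schwarz
  have hwa : ∑ b : Fin T → Bool,
      DPAux.wfun T p b * max (Real.sqrt (DPAux.kfun T b) - p*Real.sqrt T) 0
      ≤ Real.sqrt (p*T*(1-p)) := by
    set a : (Fin T → Bool) → ℝ :=
      fun b => max (Real.sqrt (DPAux.kfun T b) - p*Real.sqrt T) 0 with hadef
    have ha0 : ∀ b, 0 ≤ a b := fun b => le_max_right _ _
    have hCS := Finset.sum_mul_sq_le_sq_mul_sq Finset.univ
      (fun b : Fin T → Bool => Real.sqrt (DPAux.wfun T p b))
      (fun b => Real.sqrt (DPAux.wfun T p b) * a b)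
    have e1 : ∑ b : Fin T → Bool,
        Real.sqrt (DPAux.wfun T p b) * (Real.sqrt (DPAux.wfun T p b) * a b)
        = ∑ b : Fin T → Bool, DPAux.wfun T p b * a b :=
      Finset.sum_congr rfl fun b _ => by rw [← mul_assoc, Real.mul_self_sqrt (hw0 b)]
    have e2 : ∑ b : Fin T → Bool, (Real.sqrt (DPAux.wfun T p b))^2 = 1 := by
      rw [Finset.sum_congr rfl fun b _ => Real.sq_sqrt (hw0 b), DPAux.sum_wfun]
    have e3 : ∑ b : Fin T → Bool, (Real.sqrt (DPAux.wfun T p b) * a b)^2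
        = ∑ b : Fin T → Bool, DPAux.wfun T p b * (a b)^2 :=
      Finset.sum_congr rfl fun b _ => by rw [mul_pow, Real.sq_sqrt (hw0 b)]
    rw [e1, e2, e3, one_mul] at hCS
    have hk2 : ∀ b : Fin T → Bool, DPAux.wfun T p b * (a b)^2
        ≤ DPAux.wfun T p b * ((DPAux.kfun T b : ℝ)
            - 2*(p*Real.sqrt T)*Real.sqrt (DPAux.kfun T b) + p^2*T) := by
      intro b
      refine mul_le_mul_of_nonneg_left ?_ (hw0 b)
      have hsq : (a b)^2 ≤ (Real.sqrt (DPAux.kfun T b) - p*Real.sqrt T)^2 := by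
        rcases le_total (Real.sqrt (DPAux.kfun T b) - p*Real.sqrt T) 0 with h|h
        · have h8 : a b = 0 := max_eq_right h
          rw [h8]
          simpa using sq_nonneg (Real.sqrt (DPAux.kfun T b) - p*Real.sqrt T)
        · have h8 : a b = Real.sqrt (DPAux.kfun T b) - p*Real.sqrt T := max_eq_left h
          rw [h8]
      calc (a b)^2 ≤ (Real.sqrt (DPAux.kfun T b) - p*Real.sqrt T)^2 := hsq
      _ = (DPAux.kfun T b : ℝ) - 2*(p*Real.sqrt T)*Real.sqrt (DPAux.kfun T b) + p^2*T := by
          rw [sub_sq, Real.sq_sqrt (Nat.cast_nonneg _), mul_pow, Real.sq_sqrt hT'.le]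
          ring
    have hlb : p*Real.sqrt T
        ≤ ∑ b : Fin T → Bool, DPAux.wfun T p b * Real.sqrt (DPAux.kfun T b) := by
      have hptw : ∀ b : Fin T → Bool,
          DPAux.wfun T p b * ((DPAux.kfun T b : ℝ)/Real.sqrt T)
            ≤ DPAux.wfun T p b * Real.sqrt (DPAux.kfun T b) := by
        intro b
        refine mul_le_mul_of_nonneg_left ?_ (hw0 b)
        rw [div_le_iff₀ hsT]
        calc (DPAux.kfun T b : ℝ)
            = Real.sqrt (DPAux.kfun T b) * Real.sqrt (DPAux.kfun T b) :=
              (Real.mul_self_sqrt (Nat.cast_nonneg _)).symm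
        _ ≤ Real.sqrt (DPAux.kfun T b) * Real.sqrt T :=
              mul_le_mul_of_nonneg_left
                (Real.sqrt_le_sqrt (by exact_mod_cast DPAux.kfun_le T b))
                (Real.sqrt_nonneg _)
      have hpq : p*Real.sqrt T = (p*T)/Real.sqrt T := by
        rw [eq_div_iff hsT.ne', mul_assoc, Real.mul_self_sqrt hT'.le]
      calc p*Real.sqrt T = (p*T)/Real.sqrt T := hpq
      _ = ∑ b : Fin T → Bool, DPAux.wfun T p b * ((DPAux.kfun T b : ℝ)/Real.sqrt T) := by
          rw [Finset.sum_congr rfl fun (b : Fin T → Bool) _ =>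
            (mul_div_assoc (DPAux.wfun T p b) (DPAux.kfun T b : ℝ) (Real.sqrt T)).symm,
            ← Finset.sum_div, DPAux.sum_wfun_mul_k]
      _ ≤ ∑ b : Fin T → Bool, DPAux.wfun T p b * Real.sqrt (DPAux.kfun T b) :=
          Finset.sum_le_sum fun b _ => hptw b
    have hsum2 : ∑ b : Fin T → Bool, DPAux.wfun T p b * ((DPAux.kfun T b : ℝ)
          - 2*(p*Real.sqrt T)*Real.sqrt (DPAux.kfun T b) + p^2*T)
        = (p*T) - 2*(p*Real.sqrt T)
            * (∑ b : Fin T → Bool, DPAux.wfun T p b * Real.sqrt (DPAux.kfun T b)) + p^2*T := by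
      have hptw : ∀ b : Fin T → Bool, DPAux.wfun T p b * ((DPAux.kfun T b : ℝ)
            - 2*(p*Real.sqrt T)*Real.sqrt (DPAux.kfun T b) + p^2*T)
          = DPAux.wfun T p b * (DPAux.kfun T b : ℝ)
            - 2*(p*Real.sqrt T)*(DPAux.wfun T p b * Real.sqrt (DPAux.kfun T b))
            + (p^2*T)*DPAux.wfun T p b := fun b => by ring
      rw [Finset.sum_congr rfl fun b _ => hptw b, Finset.sum_add_distrib,
        Finset.sum_sub_distrib, ← Finset.mul_sum, ← Finset.mul_sum,
        DPAux.sum_wfun_mul_k, DPAux.sum_wfun]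
      ring
    have hvar : ∑ b : Fin T → Bool, DPAux.wfun T p b * (a b)^2 ≤ p*T*(1-p) := by
      calc ∑ b : Fin T → Bool, DPAux.wfun T p b * (a b)^2
          ≤ ∑ b : Fin T → Bool, DPAux.wfun T p b * ((DPAux.kfun T b : ℝ)
              - 2*(p*Real.sqrt T)*Real.sqrt (DPAux.kfun T b) + p^2*T) :=
            Finset.sum_le_sum fun b _ => hk2 b
      _ = (p*T) - 2*(p*Real.sqrt T)
            * (∑ b : Fin T → Bool, DPAux.wfun T p b * Real.sqrt (DPAux.kfun T b)) + p^2*T :=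
            hsum2
      _ ≤ p*T*(1-p) := by
          nlinarith [mul_le_mul_of_nonneg_left hlb
              (by positivity : (0:ℝ) ≤ 2*(p*Real.sqrt T)),
            Real.sq_sqrt hT'.le]
    have hfin : (∑ b : Fin T → Bool, DPAux.wfun T p b * a b)^2 ≤ p*T*(1-p) :=
      le_trans hCS hvar
    have hnn : 0 ≤ ∑ b : Fin T → Bool, DPAux.wfun T p b * a b :=
      Finset.sum_nonneg fun b _ => mul_nonneg (hw0 b) (ha0 b)
    calc ∑ b : Fin T → Bool, DPAux.wfun T p b * a b
        = Real.sqrt ((∑ b : Fin T → Bool, DPAux.wfun T p b * a b)^2) :=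
          (Real.sqrt_sq hnn).symm
    _ ≤ Real.sqrt (p*T*(1-p)) := Real.sqrt_le_sqrt hfin
  -- conclusion
  haveI : Nonempty {A : Set (Fin T → Fin d → ℝ) // MeasurableSet A} :=
    ⟨⟨∅, MeasurableSet.empty⟩⟩
  rw [tv]
  refine ciSup_le fun A => ?_
  rw [DPAux.dpsgd_apply_toReal T d p hp0 hp1 v g0 A.1,
    DPAux.dpsgd_apply_toReal T d p hp0 hp1 v g1 A.1]
  have h2pi : (2:ℝ) ≤ Real.sqrt π * Real.sqrt 2 := by
    calc (2:ℝ) = Real.sqrt 4 := by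
          rw [show (4:ℝ) = 2^2 by norm_num, Real.sqrt_sq (by norm_num : (0:ℝ) ≤ 2)]
    _ ≤ Real.sqrt (π*2) := Real.sqrt_le_sqrt (by nlinarith [Real.pi_gt_three])
    _ = Real.sqrt π * Real.sqrt 2 := Real.sqrt_mul Real.pi_pos.le 2
  calc |(∑ b : Fin T → Bool, DPAux.wfun T p b *
          ((Measure.pi fun t => Measure.pi fun j =>
            gaussianReal (if b t then g0 t j else 0) v) A.1).toReal)
      - ∑ b : Fin T → Bool, DPAux.wfun T p b *
          ((Measure.pi fun t => Measure.pi fun j =>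
            gaussianReal (if b t then g1 t j else 0) v) A.1).toReal|
      = |∑ b : Fin T → Bool, (DPAux.wfun T p b *
          ((Measure.pi fun t => Measure.pi fun j =>
            gaussianReal (if b t then g0 t j else 0) v) A.1).toReal
        - DPAux.wfun T p b *
          ((Measure.pi fun t => Measure.pi fun j =>
            gaussianReal (if b t then g1 t j else 0) v) A.1).toReal)| := by
        rw [Finset.sum_sub_distrib]
  _ ≤ ∑ b : Fin T → Bool, |DPAux.wfun T p b *
          ((Measure.pi fun t => Measure.pi fun j =>
            gaussianReal (if b t then g0 t j else 0) v) A.1).toReal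
        - DPAux.wfun T p b *
          ((Measure.pi fun t => Measure.pi fun j =>
            gaussianReal (if b t then g1 t j else 0) v) A.1).toReal| :=
        Finset.abs_sum_le_sum_abs _ _
  _ = ∑ b : Fin T → Bool, DPAux.wfun T p b *
        |((Measure.pi fun t => Measure.pi fun j =>
            gaussianReal (if b t then g0 t j else 0) v) A.1).toReal
          - ((Measure.pi fun t => Measure.pi fun j =>
            gaussianReal (if b t then g1 t j else 0) v) A.1).toReal| :=
        Finset.sum_congr rfl fun b _ => by
          rw [← mul_sub, abs_mul, abs_of_nonneg (hw0 b)]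
  _ ≤ ∑ b : Fin T → Bool, DPAux.wfun T p b * (erf x0 + (2/Real.sqrt π)
        * (max (Real.sqrt (DPAux.kfun T b) - p*Real.sqrt T) 0 / (Real.sqrt 2 * σ))) :=
        Finset.sum_le_sum fun b _ =>
          mul_le_mul_of_nonneg_left (hbound b A.1 A.2) (hw0 b)
  _ = erf x0 + (2/Real.sqrt π)/(Real.sqrt 2*σ)
        * ∑ b : Fin T → Bool, DPAux.wfun T p b
            * max (Real.sqrt (DPAux.kfun T b) - p*Real.sqrt T) 0 := by
        have hptw : ∀ b : Fin T → Bool, DPAux.wfun T p b * (erf x0 + (2/Real.sqrt π)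
            * (max (Real.sqrt (DPAux.kfun T b) - p*Real.sqrt T) 0 / (Real.sqrt 2 * σ)))
          = DPAux.wfun T p b * erf x0 + (2/Real.sqrt π)/(Real.sqrt 2*σ)
              * (DPAux.wfun T p b
                  * max (Real.sqrt (DPAux.kfun T b) - p*Real.sqrt T) 0) := fun b => by
          ring
        rw [Finset.sum_congr rfl fun b _ => hptw b, Finset.sum_add_distrib,
          ← Finset.sum_mul, DPAux.sum_wfun, one_mul, ← Finset.mul_sum]
  _ ≤ erf x0 + (2/Real.sqrt π)/(Real.sqrt 2*σ) * Real.sqrt (p*T*(1-p)) := by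
        have hc : (0:ℝ) ≤ (2/Real.sqrt π)/(Real.sqrt 2*σ) := by positivity
        have := mul_le_mul_of_nonneg_left hwa hc
        linarith
  _ ≤ erf x0 + Real.sqrt (p*T*(1-p))/σ := by
        have hX : 0 ≤ Real.sqrt (p*T*(1-p)) := Real.sqrt_nonneg _
        have hstep : (2/Real.sqrt π)/(Real.sqrt 2*σ) * Real.sqrt (p*T*(1-p))
            ≤ Real.sqrt (p*T*(1-p))/σ := by
          rw [div_div, div_mul_eq_mul_div, div_le_div_iff₀ (by positivity) hσ]
          nlinarith [mul_le_mul_of_nonneg_right h2pi (mul_nonneg hX hσ.le)]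
        linarith
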